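/- In the multi-region setup, fix a region r with I_r nonempty and a nonnegative integer k. Assume: (i) for every image i ∈ I_r and region t ∈ Ī_i, ‖Q_{t,i}ᵀ(L_t − L*_t)e_{f_t^i}‖_{ℓ2} ≤ l₀·σ*_t·qᵏ/√(n_t); (ii) for every region t ∈ U_r, E_t = S*_t − S_t has at most α_t·m_t nonzero entries per column and ‖E_t‖_{ℓ∞} ≤ s₀·σ*_t·qᵏ/√(m_t n_t); (iii) ‖P^i_{r,t}‖_2 ≤ √(σ*_r/σ*_t)·(m_t n_t/(m_r n_r))^{1/4} for all i ∈ I_r, t ∈ Ī_i; (iv) ‖Q_{t,i}ᵀe_p‖_{ℓ2} ≤ ν√(d/m_t) for all t, i and row indices p. Define G_r = Σ_{i∈I_r}Σ_{t∈Ī_i} Q_{r,i}P^i_{r,t}Q_{t,i}ᵀ(L_t − L*_t)e_{f_t^i}e_{f_r^i}ᵀ, F_r = Σ_{i∈I_r}Σ_{t∈Ī_i} Q_{r,i}P^i_{r,t}Q_{t,i}ᵀ(S_t − S*_t)e_{f_t^i}e_{f_r^i}ᵀ, and M_r = G_r + F_r + E_r. Then for every u ∈ ℝ^{m_r}: ‖M_rᵀu‖_{ℓ∞}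 ≤ [ l₀·ν·√d·ω_r + s₀·(1 + ν²d)·α̃_r ]·σ*_r·qᵏ·√(m_r/n_r)·‖u‖_{ℓ∞}, where ω_r = Σ_{t∈U_r}√(σ*_t/σ*_r)·(m_t n_r/(m_r n_t))^{1/4} and α̃_r = Σ_{t∈U_r} α_t·√(σ*_t/σ*_r)·(m_t n_r/(m_r n_t))^{1/4}. -/

import Mathlib

set_option maxHeartbeats 1000000


open Matrix
open scoped BigOperators

noncomputable def l2 {n : ℕ} (v : Fin n → ℝ) : ℝ := Real.sqrt (∑ i, v i ^ 2)

noncomputable def vinf {n : ℕ} (v : Fin n → ℝ) : ℝ := ⨆ i, |v i|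

noncomputable def linf {m n : ℕ} (X : Matrix (Fin m) (Fin n) ℝ) : ℝ := ⨆ i, ⨆ j, |X i j|

noncomputable def frob {m n : ℕ} (X : Matrix (Fin m) (Fin n) ℝ) : ℝ :=
  Real.sqrt (∑ i, ∑ j, X i j ^ 2)

noncomputable def spec {m n : ℕ} (X : Matrix (Fin m) (Fin n) ℝ) : ℝ :=
  ‖LinearMap.toContinuousLinearMap (Matrix.toEuclideanLin X)‖

def supp {m n : ℕ} (X : Matrix (Fin m) (Fin n) ℝ) : Set (Fin m × Fin n) :=
  {p | X p.1 p.2 ≠ 0}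

noncomputable def sthr {m n : ℕ} (ζ : ℝ) (X : Matrix (Fin m) (Fin n) ℝ) :
    Matrix (Fin m) (Fin n) ℝ :=
  Matrix.of fun i j => Real.sign (X i j) * max (|X i j| - ζ) 0

lemma l2_eq_norm {m : ℕ} (v : Fin m → ℝ) :
    l2 v = ‖(WithLp.equiv 2 (Fin m → ℝ)).symm v‖ := by
  rw [EuclideanSpace.norm_eq]
  simp [l2, Real.norm_eq_abs, sq_abs]

lemma l2_nonneg {m : ℕ} (v : Fin m → ℝ) : 0 ≤ l2 v := Real.sqrt_nonneg _

lemma l2_neg {m : ℕ} (v : Fin m → ℝ) : l2 (-v) = l2 v := by simp [l2]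

lemma abs_dot_le {m : ℕ} (a b : Fin m → ℝ) : |a ⬝ᵥ b| ≤ l2 a * l2 b := by
  have h := abs_real_inner_le_norm ((WithLp.equiv 2 (Fin m → ℝ)).symm a)
    ((WithLp.equiv 2 (Fin m → ℝ)).symm b)
  rw [l2_eq_norm, l2_eq_norm]
  simpa [PiLp.inner_apply, RCLike.inner_apply, dotProduct, mul_comm] using h

lemma l2_mulVec_le {m k : ℕ} (A : Matrix (Fin m) (Fin k) ℝ) (v : Fin k → ℝ) :
    l2 (A *ᵥ v) ≤ spec A * l2 v := by
  have h := (LinearMap.toContinuousLinearMap (Matrix.toEuclideanLin A)).le_opNorm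
    ((WithLp.equiv 2 (Fin k → ℝ)).symm v)
  rw [l2_eq_norm, l2_eq_norm]
  simpa [spec, Matrix.toEuclideanLin_apply_piLp_toLp] using h

lemma l2_mulVec_decomp {m k : ℕ} (A : Matrix (Fin k) (Fin m) ℝ) (u : Fin m → ℝ) :
    l2 (A *ᵥ u) ≤ ∑ p, |u p| * l2 (A *ᵥ Pi.single p 1) := by
  have hu : A *ᵥ u = ∑ p, u p • (A *ᵥ Pi.single p 1) := by
    ext q
    simp only [Matrix.mulVec, dotProduct, Finset.sum_apply, Pi.smul_apply, smul_eq_mul,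
      Pi.single_apply, mul_ite, mul_one, mul_zero, Finset.sum_ite_eq', Finset.mem_univ, if_true]
    simp [mul_comm]
  rw [hu]
  have : ((WithLp.equiv 2 (Fin k → ℝ)).symm (∑ p, u p • (A *ᵥ Pi.single p 1)))
      = ∑ p, u p • ((WithLp.equiv 2 (Fin k → ℝ)).symm (A *ᵥ Pi.single p 1)) := by
    simp [WithLp.equiv_symm_apply]
  rw [l2_eq_norm, this]
  refine (norm_sum_le _ _).trans ?_
  refine Finset.sum_le_sum fun p _ => ?_
  rw [norm_smul, Real.norm_eq_abs, l2_eq_norm]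

lemma abs_le_vinf {m : ℕ} (v : Fin m → ℝ) (p : Fin m) : |v p| ≤ vinf v := by
  show |v p| ≤ ⨆ i, |v i|
  exact le_ciSup (f := fun i => |v i|) (Set.Finite.bddAbove (Set.finite_range _)) p

lemma abs_le_linf {m k : ℕ} (X : Matrix (Fin m) (Fin k) ℝ) (p : Fin m) (j : Fin k) :
    |X p j| ≤ linf X := by
  show |X p j| ≤ ⨆ i, ⨆ j, |X i j|
  exact le_trans (le_ciSup (f := fun j => |X p j|) (Set.Finite.bddAbove (Set.finite_range _)) j)
    (le_ciSup (f := fun i => ⨆ j, |X i j|) (Set.Finite.bddAbove (Set.finite_range _)) p)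

lemma vecMulVec_transpose_mulVec {m k : ℕ} (a : Fin m → ℝ) (b : Fin k → ℝ) (u : Fin m → ℝ) :
    (Matrix.vecMulVec a b)ᵀ *ᵥ u = (a ⬝ᵥ u) • b := by
  ext j
  simp only [Matrix.mulVec, dotProduct, Matrix.transpose_apply, Matrix.vecMulVec_apply,
    Pi.smul_apply, smul_eq_mul, Finset.sum_mul]
  exact Finset.sum_congr rfl fun x _ => by ring

lemma pow4_inj {x y : ℝ} (hx : 0 ≤ x) (hy : 0 ≤ y) (h : x ^ 4 = y ^ 4) : x = y :=
  (pow_left_strictMonoOn₀ (n := 4) (by norm_num)).injOn hx hy h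

lemma rpow_quarter_pow4 {x : ℝ} (hx : 0 ≤ x) : (x ^ ((1:ℝ)/4)) ^ (4:ℕ) = x := by
  rw [← Real.rpow_natCast (x ^ ((1:ℝ)/4)) 4, ← Real.rpow_mul hx]
  norm_num

lemma sqrt_pow4 {x : ℝ} (hx : 0 ≤ x) : Real.sqrt x ^ (4:ℕ) = x ^ 2 := by
  rw [show (4:ℕ) = 2*2 from rfl, pow_mul, Real.sq_sqrt hx]

lemma alg3 {m n : ℝ} (hm : 0 < m) (hn : 0 < n) :
    m / Real.sqrt (m * n) = Real.sqrt (m / n) := by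
  rw [show m / n = m^2 / (m*n) by field_simp, Real.sqrt_div (by positivity),
    Real.sqrt_sq hm.le]

lemma mul_sqrt_div {x m : ℝ} (hx : 0 ≤ x) (hm : 0 < m) :
    m * Real.sqrt (x / m) = Real.sqrt (x * m) := by
  rw [show x * m = (x/m) * m^2 by field_simp, Real.sqrt_mul (by positivity),
    Real.sqrt_sq hm.le, mul_comm]

lemma alg1 {mR nR mt nt σr σt d ν l qk : ℝ}
    (hmR : 0 < mR) (hnR : 0 < nR) (hmt : 0 < mt) (hnt : 0 < nt)
    (hσr : 0 < σr) (hσt : 0 < σt) (hd : 0 < d) (hν : 0 < ν) (hl : 0 < l) (hqk : 0 < qk) :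
    (ν * Real.sqrt (d * mR)) * (Real.sqrt (σr / σt) * ((mt * nt) / (mR * nR)) ^ ((1:ℝ)/4))
      * (l * σt * qk / Real.sqrt nt)
    = l * ν * Real.sqrt d *
      (Real.sqrt (σt / σr) * ((mt * nR) / (mR * nt)) ^ ((1:ℝ)/4)) * σr * qk
        * Real.sqrt (mR / nR) := by
  apply pow4_inj (by positivity) (by positivity)
  have e1 : Real.sqrt (d * mR) ^ (4:ℕ) = (d*mR)^2 := sqrt_pow4 (by positivity)
  have e2 : Real.sqrt (σr / σt) ^ (4:ℕ) = (σr/σt)^2 := sqrt_pow4 (by positivity)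
  have e3 : (((mt * nt) / (mR * nR)) ^ ((1:ℝ)/4)) ^ (4:ℕ) = (mt*nt)/(mR*nR) :=
    rpow_quarter_pow4 (by positivity)
  have e4 : Real.sqrt nt ^ (4:ℕ) = nt^2 := sqrt_pow4 hnt.le
  have e5 : Real.sqrt d ^ (4:ℕ) = d^2 := sqrt_pow4 hd.le
  have e6 : Real.sqrt (σt / σr) ^ (4:ℕ) = (σt/σr)^2 := sqrt_pow4 (by positivity)
  have e7 : (((mt * nR) / (mR * nt)) ^ ((1:ℝ)/4)) ^ (4:ℕ) = (mt*nR)/(mR*nt) :=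
    rpow_quarter_pow4 (by positivity)
  have e8 : Real.sqrt (mR / nR) ^ (4:ℕ) = (mR/nR)^2 := sqrt_pow4 (by positivity)
  have h1 := hmR.ne'; have h2 := hnR.ne'; have h3 := hmt.ne'; have h4 := hnt.ne'
  have h5 := hσr.ne'; have h6 := hσt.ne'
  simp only [mul_pow, div_pow, e1, e2, e3, e4, e5, e6, e7, e8]
  field_simp

lemma alg2 {mR nR mt nt σr σt d ν s αv qk : ℝ}
    (hmR : 0 < mR) (hnR : 0 < nR) (hmt : 0 < mt) (hnt : 0 < nt)
    (hσr : 0 < σr) (hσt : 0 < σt) (hd : 0 < d) (hν : 0 < ν) (hs : 0 < s) (hαv : 0 < αv)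
    (hqk : 0 < qk) :
    (ν * Real.sqrt (d * mR)) * (Real.sqrt (σr / σt) * ((mt * nt) / (mR * nR)) ^ ((1:ℝ)/4))
      * ((αv * mt) * (s * σt * qk / Real.sqrt (mt * nt) * (ν * Real.sqrt (d / mt))))
    = s * ν^2 * d * (αv *
      (Real.sqrt (σt / σr) * ((mt * nR) / (mR * nt)) ^ ((1:ℝ)/4))) * σr * qk
        * Real.sqrt (mR / nR) := by
  apply pow4_inj (by positivity) (by positivity)
  have e1 : Real.sqrt (d * mR) ^ (4:ℕ) = (d*mR)^2 := sqrt_pow4 (by positivity)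
  have e2 : Real.sqrt (σr / σt) ^ (4:ℕ) = (σr/σt)^2 := sqrt_pow4 (by positivity)
  have e3 : (((mt * nt) / (mR * nR)) ^ ((1:ℝ)/4)) ^ (4:ℕ) = (mt*nt)/(mR*nR) :=
    rpow_quarter_pow4 (by positivity)
  have e4 : Real.sqrt (mt * nt) ^ (4:ℕ) = (mt*nt)^2 := sqrt_pow4 (by positivity)
  have e5 : Real.sqrt (d / mt) ^ (4:ℕ) = (d/mt)^2 := sqrt_pow4 (by positivity)
  have e6 : Real.sqrt (σt / σr) ^ (4:ℕ) = (σt/σr)^2 := sqrt_pow4 (by positivity)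
  have e7 : (((mt * nR) / (mR * nt)) ^ ((1:ℝ)/4)) ^ (4:ℕ) = (mt*nR)/(mR*nt) :=
    rpow_quarter_pow4 (by positivity)
  have e8 : Real.sqrt (mR / nR) ^ (4:ℕ) = (mR/nR)^2 := sqrt_pow4 (by positivity)
  have h1 := hmR.ne'; have h2 := hnR.ne'; have h3 := hmt.ne'; have h4 := hnt.ne'
  have h5 := hσr.ne'; have h6 := hσt.ne'
  simp only [mul_pow, div_pow, e1, e2, e3, e4, e5, e6, e7, e8]
  field_simp

lemma col_formula {m' n' : ℕ} {ι κ : Type*} [DecidableEq ι] [DecidableEq κ]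
    (s : Finset ι) (T : ι → Finset κ) (v : ι → κ → Fin m' → ℝ) (g : ι → Fin n')
    (u : Fin m' → ℝ) (j : Fin n') (i : ι) (hi : i ∈ s) (hgi : g i = j)
    (hinj : ∀ i' ∈ s, i' ≠ i → g i' ≠ j) :
    ((∑ i' ∈ s, ∑ t ∈ T i', Matrix.vecMulVec (v i' t) (Pi.single (g i') 1))ᵀ *ᵥ u) j
      = ∑ t ∈ T i, v i t ⬝ᵥ u := by
  rw [Matrix.transpose_sum]
  simp only [Matrix.transpose_sum]
  have h1 : (∑ x ∈ s, ∑ t ∈ T x, (Matrix.vecMulVec (v x t) (Pi.single (g x) 1))ᵀ) *ᵥ u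
      = ∑ x ∈ s, (∑ t ∈ T x, (Matrix.vecMulVec (v x t) (Pi.single (g x) 1))ᵀ) *ᵥ u :=
    map_sum (Matrix.mulVec.addMonoidHomLeft u) _ s
  rw [h1, Finset.sum_apply]
  rw [Finset.sum_eq_single_of_mem i hi]
  · have h2 : (∑ t ∈ T i, (Matrix.vecMulVec (v i t) (Pi.single (g i) 1))ᵀ) *ᵥ u
        = ∑ t ∈ T i, (Matrix.vecMulVec (v i t) (Pi.single (g i) 1))ᵀ *ᵥ u :=
      map_sum (Matrix.mulVec.addMonoidHomLeft u) _ (T i)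
    rw [h2, Finset.sum_apply]
    refine Finset.sum_congr rfl fun t _ => ?_
    rw [vecMulVec_transpose_mulVec]
    simp [hgi, Pi.single_apply]
  · intro i' hi' hne
    have h2 : (∑ t ∈ T i', (Matrix.vecMulVec (v i' t) (Pi.single (g i') 1))ᵀ) *ᵥ u
        = ∑ t ∈ T i', (Matrix.vecMulVec (v i' t) (Pi.single (g i') 1))ᵀ *ᵥ u :=
      map_sum (Matrix.mulVec.addMonoidHomLeft u) _ (T i')
    rw [h2, Finset.sum_apply]
    refine Finset.sum_eq_zero fun t _ => ?_
    rw [vecMulVec_transpose_mulVec]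
    simp [Pi.single_apply, hinj i' hi' hne]

lemma mulVec_dot {m k : ℕ} (A : Matrix (Fin m) (Fin k) ℝ) (x : Fin k → ℝ) (u : Fin m → ℝ) :
    (A *ᵥ x) ⬝ᵥ u = x ⬝ᵥ (Aᵀ *ᵥ u) := by
  rw [dotProduct_comm, Matrix.dotProduct_mulVec, ← Matrix.mulVec_transpose,
    dotProduct_comm]

/-- Lemma: multi-region bound on `‖M_rᵀu‖_{ℓ∞}`. -/
theorem stmt7 (n d Rn : ℕ) (k : ℕ) (hn : 0 < n) (hd : 0 < d)
    (mr nr : Fin Rn → ℕ) (hmr : ∀ t, 0 < mr t) (hnr : ∀ t, 0 < nr t)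
    (I : Fin Rn → Finset (Fin n)) (hcard : ∀ t, (I t).card = nr t)
    (f : (t : Fin Rn) → Fin n → Fin (nr t))
    (hf : ∀ t, Set.BijOn (f t) ↑(I t) Set.univ)
    (Q : (t : Fin Rn) → Fin n → Matrix (Fin (mr t)) (Fin d) ℝ)
    (hQortho : ∀ t i, (Q t i)ᵀ * Q t i = 1)
    (P : Fin n → Fin Rn → Fin Rn → Matrix (Fin d) (Fin d) ℝ)
    (σs : Fin Rn → ℝ) (hσ : ∀ t, 0 < σs t)
    (L Lstar S Sstar E : (t : Fin Rn) → Matrix (Fin (mr t)) (Fin (nr t)) ℝ)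
    (hEdef : ∀ t, E t = Sstar t - S t)
    (α : Fin Rn → ℝ) (hα : ∀ t, 0 < α t)
    (ν l₀ s₀ q : ℝ) (hν : 0 < ν) (hl₀ : 0 < l₀) (hs₀ : 0 < s₀) (hq : 0 < q)
    (r : Fin Rn) (hIr : (I r).Nonempty)
    (Ibar : Fin n → Finset (Fin Rn))
    (hIbar : ∀ i, Ibar i = Finset.univ.filter fun t => i ∈ I t)
    (U : Finset (Fin Rn))
    (hU : U = (I r).biUnion fun i => Finset.univ.filter fun t => i ∈ I t)
    (ω αt : ℝ)
    (hω : ω = ∑ t ∈ U, Real.sqrt (σs t / σs r) *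
      (((mr t : ℝ) * nr r) / ((mr r : ℝ) * nr t)) ^ ((1 : ℝ) / 4))
    (hαt : αt = ∑ t ∈ U, α t * Real.sqrt (σs t / σs r) *
      (((mr t : ℝ) * nr r) / ((mr r : ℝ) * nr t)) ^ ((1 : ℝ) / 4))
    (h1 : ∀ i ∈ I r, ∀ t ∈ Ibar i,
      l2 ((Q t i)ᵀ *ᵥ fun p => (L t - Lstar t) p (f t i)) ≤
        l₀ * σs t * q ^ k / Real.sqrt (nr t))
    (h2col : ∀ t ∈ U, ∀ j : Fin (nr t),
      ((Finset.univ.filter fun p => E t p j ≠ 0).card : ℝ) ≤ α t * mr t)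
    (h2inf : ∀ t ∈ U, linf (E t) ≤ s₀ * σs t * q ^ k / Real.sqrt ((mr t : ℝ) * nr t))
    (h3 : ∀ i ∈ I r, ∀ t ∈ Ibar i,
      spec (P i r t) ≤ Real.sqrt (σs r / σs t) *
        (((mr t : ℝ) * nr t) / ((mr r : ℝ) * nr r)) ^ ((1 : ℝ) / 4))
    (h4 : ∀ (t : Fin Rn) (i : Fin n) (p : Fin (mr t)),
      l2 ((Q t i)ᵀ *ᵥ Pi.single p 1) ≤ ν * Real.sqrt ((d : ℝ) / mr t))
    (G F Mr : Matrix (Fin (mr r)) (Fin (nr r)) ℝ)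
    (hG : G = ∑ i ∈ I r, ∑ t ∈ Ibar i, Matrix.vecMulVec
      ((Q r i * P i r t * (Q t i)ᵀ) *ᵥ fun p => (L t - Lstar t) p (f t i))
      (Pi.single (f r i) 1))
    (hF : F = ∑ i ∈ I r, ∑ t ∈ Ibar i, Matrix.vecMulVec
      ((Q r i * P i r t * (Q t i)ᵀ) *ᵥ fun p => (S t - Sstar t) p (f t i))
      (Pi.single (f r i) 1))
    (hM : Mr = G + F + E r) :
    ∀ u : Fin (mr r) → ℝ,
      vinf (Mrᵀ *ᵥ u) ≤
        (l₀ * ν * Real.sqrt d * ω + s₀ * (1 + ν ^ 2 * d) * αt) *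
          σs r * q ^ k * Real.sqrt ((mr r : ℝ) / nr r) * vinf u := by
  intro u
  have hσr := hσ r
  have hmrr : (0:ℝ) < mr r := by exact_mod_cast hmr r
  have hnrr : (0:ℝ) < nr r := by exact_mod_cast hnr r
  have hd' : (0:ℝ) < d := by exact_mod_cast hd
  have hqk : 0 < q ^ k := pow_pos hq k
  set c := vinf u with hcdef
  have hcu : ∀ p, |u p| ≤ c := fun p => abs_le_vinf u p
  have hc0 : (0:ℝ) ≤ c := le_trans (abs_nonneg _) (hcu ⟨0, hmr r⟩)
  -- membership helpers
  have hIbarU : ∀ i ∈ I r, Ibar i ⊆ U := by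
    intro i hi t ht
    rw [hU]
    rw [hIbar i] at ht
    exact Finset.mem_biUnion.2 ⟨i, hi, ht⟩
  have hrU : r ∈ U := by
    obtain ⟨i0, hi0⟩ := hIr
    rw [hU]
    exact Finset.mem_biUnion.2 ⟨i0, hi0, Finset.mem_filter.2 ⟨Finset.mem_univ _, hi0⟩⟩
  -- K notation
  have hK0 : ∀ t : Fin Rn, (0:ℝ) ≤ Real.sqrt (σs t / σs r) *
      (((mr t : ℝ) * nr r) / ((mr r : ℝ) * nr t)) ^ ((1:ℝ)/4) := fun t => by positivity
  have hαt' : αt = ∑ t ∈ U, α t * (Real.sqrt (σs t / σs r) *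
      (((mr t : ℝ) * nr r) / ((mr r : ℝ) * nr t)) ^ ((1:ℝ)/4)) := by
    rw [hαt]; exact Finset.sum_congr rfl fun t _ => by ring
  have hαrαt : α r ≤ αt := by
    rw [hαt']
    have h0 : ∀ t ∈ U, (0:ℝ) ≤ α t * (Real.sqrt (σs t / σs r) *
        (((mr t : ℝ) * nr r) / ((mr r : ℝ) * nr t)) ^ ((1:ℝ)/4)) :=
      fun t _ => mul_nonneg (hα t).le (hK0 t)
    have := Finset.single_le_sum h0 hrU
    calc α r = α r * (Real.sqrt (σs r / σs r) *
        (((mr r : ℝ) * nr r) / ((mr r : ℝ) * nr r)) ^ ((1:ℝ)/4)) := by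
          rw [div_self hσr.ne', Real.sqrt_one, div_self (by positivity), Real.one_rpow]; ring
      _ ≤ _ := this
  -- bound on l2 ((Q r i)ᵀ *ᵥ u)
  have ha : ∀ i : Fin n, l2 ((Q r i)ᵀ *ᵥ u) ≤ ν * Real.sqrt ((d:ℝ) * mr r) * c := by
    intro i
    refine (l2_mulVec_decomp _ u).trans ?_
    have hb : ∀ p : Fin (mr r), |u p| * l2 ((Q r i)ᵀ *ᵥ Pi.single p 1)
        ≤ c * (ν * Real.sqrt ((d:ℝ)/mr r)) :=
      fun p => mul_le_mul (hcu p) (h4 r i p) (l2_nonneg _) hc0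
    refine (Finset.sum_le_sum fun p _ => hb p).trans ?_
    rw [Finset.sum_const, Finset.card_univ, Fintype.card_fin, nsmul_eq_mul]
    refine le_of_eq ?_
    rw [← mul_sqrt_div hd'.le hmrr]
    ring
  -- dot product identity
  have hdot : ∀ (t : Fin Rn) (i : Fin n) (w : Fin (mr t) → ℝ),
      ((Q r i * P i r t * (Q t i)ᵀ) *ᵥ w) ⬝ᵥ u
        = (P i r t *ᵥ ((Q t i)ᵀ *ᵥ w)) ⬝ᵥ ((Q r i)ᵀ *ᵥ u) := by
    intro t i w
    rw [← Matrix.mulVec_mulVec, ← Matrix.mulVec_mulVec, mulVec_dot]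
  -- main per-entry bound
  have key : ∀ j : Fin (nr r), |(Mrᵀ *ᵥ u) j| ≤
      (l₀ * ν * Real.sqrt d * ω + s₀ * (1 + ν ^ 2 * d) * αt) *
        σs r * q ^ k * Real.sqrt ((mr r : ℝ) / nr r) * c := by
    intro j
    obtain ⟨i, hiS, hfi⟩ := (hf r).surjOn (Set.mem_univ j)
    have hi : i ∈ I r := hiS
    have hinj : ∀ i' ∈ I r, i' ≠ i → f r i' ≠ j := by
      intro i' hi' hne hcon
      exact hne ((hf r).injOn hi' hiS (hcon.trans hfi.symm))
    have hsplit : (Mrᵀ *ᵥ u) j = (Gᵀ *ᵥ u) j + (Fᵀ *ᵥ u) j + ((E r)ᵀ *ᵥ u) j := by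
      rw [hM, Matrix.transpose_add, Matrix.transpose_add, Matrix.add_mulVec,
        Matrix.add_mulVec]
      rfl
    -- G entry
    have hGe : (Gᵀ *ᵥ u) j = ∑ t ∈ Ibar i,
        ((Q r i * P i r t * (Q t i)ᵀ) *ᵥ fun p => (L t - Lstar t) p (f t i)) ⬝ᵥ u := by
      rw [hG]
      exact col_formula (I r) Ibar
        (fun i' t => (Q r i' * P i' r t * (Q t i')ᵀ) *ᵥ fun p => (L t - Lstar t) p (f t i'))
        (f r) u j i hi hfi hinj
    have hFe : (Fᵀ *ᵥ u) j = ∑ t ∈ Ibar i,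
        ((Q r i * P i r t * (Q t i)ᵀ) *ᵥ fun p => (S t - Sstar t) p (f t i)) ⬝ᵥ u := by
      rw [hF]
      exact col_formula (I r) Ibar
        (fun i' t => (Q r i' * P i' r t * (Q t i')ᵀ) *ᵥ fun p => (S t - Sstar t) p (f t i'))
        (f r) u j i hi hfi hinj
    -- per-term bound for G
    have hGB : ∀ t ∈ Ibar i,
        |((Q r i * P i r t * (Q t i)ᵀ) *ᵥ fun p => (L t - Lstar t) p (f t i)) ⬝ᵥ u| ≤
          (l₀ * ν * Real.sqrt d * σs r * q ^ k * Real.sqrt ((mr r : ℝ) / nr r) * c) *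
            (Real.sqrt (σs t / σs r) *
              (((mr t : ℝ) * nr r) / ((mr r : ℝ) * nr t)) ^ ((1:ℝ)/4)) := by
      intro t ht
      have hσt := hσ t
      have hmtt : (0:ℝ) < mr t := by exact_mod_cast hmr t
      have hntt : (0:ℝ) < nr t := by exact_mod_cast hnr t
      rw [hdot]
      have hs3 := h3 i hi t ht
      have hs1 := h1 i hi t ht
      calc |(P i r t *ᵥ ((Q t i)ᵀ *ᵥ fun p => (L t - Lstar t) p (f t i))) ⬝ᵥ
            ((Q r i)ᵀ *ᵥ u)|
          ≤ l2 (P i r t *ᵥ ((Q t i)ᵀ *ᵥ fun p => (L t - Lstar t) p (f t i))) *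
              l2 ((Q r i)ᵀ *ᵥ u) := abs_dot_le _ _
        _ ≤ (spec (P i r t) * l2 ((Q t i)ᵀ *ᵥ fun p => (L t - Lstar t) p (f t i))) *
              l2 ((Q r i)ᵀ *ᵥ u) :=
            mul_le_mul_of_nonneg_right (l2_mulVec_le _ _) (l2_nonneg _)
        _ ≤ ((Real.sqrt (σs r / σs t) *
              (((mr t:ℝ) * nr t) / ((mr r:ℝ) * nr r)) ^ ((1:ℝ)/4)) *
              (l₀ * σs t * q ^ k / Real.sqrt (nr t))) *
              (ν * Real.sqrt ((d:ℝ) * mr r) * c) :=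
            mul_le_mul (mul_le_mul hs3 hs1 (l2_nonneg _) (by positivity))
              (ha i) (l2_nonneg _) (by positivity)
        _ = _ := by
            rw [show ((Real.sqrt (σs r / σs t) *
              (((mr t:ℝ) * nr t) / ((mr r:ℝ) * nr r)) ^ ((1:ℝ)/4)) *
              (l₀ * σs t * q ^ k / Real.sqrt (nr t))) *
              (ν * Real.sqrt ((d:ℝ) * mr r) * c)
              = ((ν * Real.sqrt ((d:ℝ) * (mr r:ℝ))) * (Real.sqrt (σs r / σs t) *
                (((mr t:ℝ) * (nr t:ℝ)) / ((mr r:ℝ) * (nr r:ℝ))) ^ ((1:ℝ)/4)) *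
                (l₀ * σs t * q ^ k / Real.sqrt ((nr t : ℝ)))) * c from by ring,
              alg1 hmrr hnrr hmtt hntt hσr hσt hd' hν hl₀ hqk]
            ring
    -- E-column l2 bound for F terms
    have hFb : ∀ t ∈ Ibar i,
        l2 ((Q t i)ᵀ *ᵥ fun p => (S t - Sstar t) p (f t i)) ≤
          (α t * mr t) * (s₀ * σs t * q ^ k / Real.sqrt ((mr t:ℝ) * nr t) *
            (ν * Real.sqrt ((d:ℝ) / mr t))) := by
      intro t ht
      have htU : t ∈ U := hIbarU i hi ht
      have hσt := hσ t
      have hαtp := hα t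
      have hmtt : (0:ℝ) < mr t := by exact_mod_cast hmr t
      have hntt : (0:ℝ) < nr t := by exact_mod_cast hnr t
      have hlinft0 : (0:ℝ) ≤ linf (E t) :=
        le_trans (abs_nonneg _) (abs_le_linf (E t) ⟨0, hmr t⟩ (f t i))
      have hneg : (fun p => (S t - Sstar t) p (f t i)) = -(fun p => E t p (f t i)) := by
        funext p
        rw [hEdef t]
        simp [Matrix.sub_apply]
      rw [hneg, Matrix.mulVec_neg, l2_neg]
      refine (l2_mulVec_decomp _ _).trans ?_
      have hstep : ∑ p, |E t p (f t i)| * l2 ((Q t i)ᵀ *ᵥ Pi.single p 1)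
          = ∑ p ∈ Finset.univ.filter (fun p => E t p (f t i) ≠ 0),
              |E t p (f t i)| * l2 ((Q t i)ᵀ *ᵥ Pi.single p 1) :=
        (Finset.sum_filter_of_ne (by
          intro p _ hfne hE
          apply hfne
          rw [hE]
          simp)).symm
      rw [hstep]
      calc ∑ p ∈ Finset.univ.filter (fun p => E t p (f t i) ≠ 0),
            |E t p (f t i)| * l2 ((Q t i)ᵀ *ᵥ Pi.single p 1)
          ≤ (Finset.univ.filter (fun p => E t p (f t i) ≠ 0)).card •
              (linf (E t) * (ν * Real.sqrt ((d:ℝ) / mr t))) :=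
            Finset.sum_le_card_nsmul _ _ _ (fun p _ =>
              mul_le_mul (abs_le_linf (E t) p (f t i)) (h4 t i p) (l2_nonneg _) hlinft0)
        _ = ((Finset.univ.filter (fun p => E t p (f t i) ≠ 0)).card : ℝ) *
              (linf (E t) * (ν * Real.sqrt ((d:ℝ) / mr t))) := by rw [nsmul_eq_mul]
        _ ≤ (α t * mr t) * (linf (E t) * (ν * Real.sqrt ((d:ℝ) / mr t))) :=
            mul_le_mul_of_nonneg_right (h2col t htU (f t i))
              (mul_nonneg hlinft0 (by positivity))
        _ ≤ (α t * mr t) * (s₀ * σs t * q ^ k / Real.sqrt ((mr t:ℝ) * nr t) *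
              (ν * Real.sqrt ((d:ℝ) / mr t))) :=
            mul_le_mul_of_nonneg_left
              (mul_le_mul_of_nonneg_right (h2inf t htU) (by positivity))
              (by positivity)
    -- per-term bound for F
    have hFB : ∀ t ∈ Ibar i,
        |((Q r i * P i r t * (Q t i)ᵀ) *ᵥ fun p => (S t - Sstar t) p (f t i)) ⬝ᵥ u| ≤
          (s₀ * ν ^ 2 * d * σs r * q ^ k * Real.sqrt ((mr r : ℝ) / nr r) * c) *
            (α t * (Real.sqrt (σs t / σs r) *
              (((mr t : ℝ) * nr r) / ((mr r : ℝ) * nr t)) ^ ((1:ℝ)/4))) := by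
      intro t ht
      have hσt := hσ t
      have hαtp := hα t
      have hmtt : (0:ℝ) < mr t := by exact_mod_cast hmr t
      have hntt : (0:ℝ) < nr t := by exact_mod_cast hnr t
      rw [hdot]
      have hs3 := h3 i hi t ht
      have hsb := hFb t ht
      calc |(P i r t *ᵥ ((Q t i)ᵀ *ᵥ fun p => (S t - Sstar t) p (f t i))) ⬝ᵥ
            ((Q r i)ᵀ *ᵥ u)|
          ≤ l2 (P i r t *ᵥ ((Q t i)ᵀ *ᵥ fun p => (S t - Sstar t) p (f t i))) *
              l2 ((Q r i)ᵀ *ᵥ u) := abs_dot_le _ _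
        _ ≤ (spec (P i r t) * l2 ((Q t i)ᵀ *ᵥ fun p => (S t - Sstar t) p (f t i))) *
              l2 ((Q r i)ᵀ *ᵥ u) :=
            mul_le_mul_of_nonneg_right (l2_mulVec_le _ _) (l2_nonneg _)
        _ ≤ ((Real.sqrt (σs r / σs t) *
              (((mr t:ℝ) * nr t) / ((mr r:ℝ) * nr r)) ^ ((1:ℝ)/4)) *
              ((α t * mr t) * (s₀ * σs t * q ^ k / Real.sqrt ((mr t:ℝ) * nr t) *
                (ν * Real.sqrt ((d:ℝ) / mr t))))) *
              (ν * Real.sqrt ((d:ℝ) * mr r) * c) :=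
            mul_le_mul (mul_le_mul hs3 hsb (l2_nonneg _) (by positivity))
              (ha i) (l2_nonneg _) (by positivity)
        _ = _ := by
            rw [show ((Real.sqrt (σs r / σs t) *
              (((mr t:ℝ) * nr t) / ((mr r:ℝ) * nr r)) ^ ((1:ℝ)/4)) *
              ((α t * mr t) * (s₀ * σs t * q ^ k / Real.sqrt ((mr t:ℝ) * nr t) *
                (ν * Real.sqrt ((d:ℝ) / mr t))))) *
              (ν * Real.sqrt ((d:ℝ) * mr r) * c)
              = ((ν * Real.sqrt ((d:ℝ) * (mr r:ℝ))) * (Real.sqrt (σs r / σs t) *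
                (((mr t:ℝ) * (nr t:ℝ)) / ((mr r:ℝ) * (nr r:ℝ))) ^ ((1:ℝ)/4)) *
                ((α t * (mr t:ℝ)) * (s₀ * σs t * q ^ k / Real.sqrt ((mr t:ℝ) * (nr t:ℝ)) *
                  (ν * Real.sqrt ((d:ℝ) / (mr t:ℝ)))))) * c from by ring,
              alg2 hmrr hnrr hmtt hntt hσr hσt hd' hν hs₀ hαtp hqk]
            ring
    -- sum bounds
    have hωge : ∑ t ∈ Ibar i, (Real.sqrt (σs t / σs r) *
        (((mr t : ℝ) * nr r) / ((mr r : ℝ) * nr t)) ^ ((1:ℝ)/4)) ≤ ω := by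
      rw [hω]
      refine Finset.sum_le_sum_of_subset_of_nonneg (hIbarU i hi) (fun t _ _ => hK0 t)
    have hαtge : ∑ t ∈ Ibar i, (α t * (Real.sqrt (σs t / σs r) *
        (((mr t : ℝ) * nr r) / ((mr r : ℝ) * nr t)) ^ ((1:ℝ)/4))) ≤ αt := by
      rw [hαt']
      exact Finset.sum_le_sum_of_subset_of_nonneg (hIbarU i hi)
        (fun t _ _ => mul_nonneg (hα t).le (hK0 t))
    have hGsum : |(Gᵀ *ᵥ u) j| ≤
        (l₀ * ν * Real.sqrt d * σs r * q ^ k * Real.sqrt ((mr r : ℝ) / nr r) * c) * ω := by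
      rw [hGe]
      refine (Finset.abs_sum_le_sum_abs _ _).trans ?_
      refine (Finset.sum_le_sum hGB).trans ?_
      rw [← Finset.mul_sum]
      exact mul_le_mul_of_nonneg_left hωge (by positivity)
    have hFsum : |(Fᵀ *ᵥ u) j| ≤
        (s₀ * ν ^ 2 * d * σs r * q ^ k * Real.sqrt ((mr r : ℝ) / nr r) * c) * αt := by
      rw [hFe]
      refine (Finset.abs_sum_le_sum_abs _ _).trans ?_
      refine (Finset.sum_le_sum hFB).trans ?_
      rw [← Finset.mul_sum]
      exact mul_le_mul_of_nonneg_left hαtge (by positivity)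
    -- E part
    have hαr := hα r
    have hEe : ((E r)ᵀ *ᵥ u) j = ∑ p, E r p j * u p := by
      simp [Matrix.mulVec, dotProduct, Matrix.transpose_apply]
    have hlinf0 : (0:ℝ) ≤ linf (E r) :=
      le_trans (abs_nonneg _) (abs_le_linf (E r) ⟨0, hmr r⟩ j)
    have hEsum : |((E r)ᵀ *ᵥ u) j| ≤
        s₀ * αt * σs r * q ^ k * Real.sqrt ((mr r:ℝ)/nr r) * c := by
      rw [hEe]
      have hαt0 : (0:ℝ) ≤ αt := le_trans hαr.le hαrαt
      calc |∑ p, E r p j * u p| ≤ ∑ p, |E r p j * u p| := Finset.abs_sum_le_sum_abs _ _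
        _ = ∑ p, |E r p j| * |u p| := by simp [abs_mul]
        _ = ∑ p ∈ Finset.univ.filter (fun p => E r p j ≠ 0), |E r p j| * |u p| :=
            (Finset.sum_filter_of_ne (by
              intro p _ hfne hE
              apply hfne
              rw [hE]
              simp)).symm
        _ ≤ (Finset.univ.filter (fun p => E r p j ≠ 0)).card • (linf (E r) * c) :=
            Finset.sum_le_card_nsmul _ _ _ (fun p _ =>
              mul_le_mul (abs_le_linf (E r) p j) (hcu p) (abs_nonneg _) hlinf0)
        _ = ((Finset.univ.filter (fun p => E r p j ≠ 0)).card : ℝ) * (linf (E r) * c) := by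
            rw [nsmul_eq_mul]
        _ ≤ (α r * mr r) * ((s₀ * σs r * q ^ k / Real.sqrt ((mr r:ℝ) * nr r)) * c) :=
            mul_le_mul (h2col r hrU j)
              (mul_le_mul_of_nonneg_right (h2inf r hrU) hc0)
              (mul_nonneg hlinf0 hc0) (by positivity)
        _ = α r * (s₀ * σs r * q ^ k * Real.sqrt ((mr r:ℝ)/nr r)) * c := by
            rw [← alg3 hmrr hnrr]
            field_simp
        _ ≤ αt * (s₀ * σs r * q ^ k * Real.sqrt ((mr r:ℝ)/nr r)) * c :=
            mul_le_mul_of_nonneg_right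
              (mul_le_mul_of_nonneg_right hαrαt (by positivity)) hc0
        _ = s₀ * αt * σs r * q ^ k * Real.sqrt ((mr r:ℝ)/nr r) * c := by ring
    calc |(Mrᵀ *ᵥ u) j|
        = |(Gᵀ *ᵥ u) j + (Fᵀ *ᵥ u) j + ((E r)ᵀ *ᵥ u) j| := by rw [hsplit]
      _ ≤ |(Gᵀ *ᵥ u) j| + |(Fᵀ *ᵥ u) j| + |((E r)ᵀ *ᵥ u) j| := abs_add_three _ _ _
      _ ≤ (l₀ * ν * Real.sqrt d * σs r * q ^ k * Real.sqrt ((mr r : ℝ) / nr r) * c) * ω +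
          (s₀ * ν ^ 2 * d * σs r * q ^ k * Real.sqrt ((mr r : ℝ) / nr r) * c) * αt +
          s₀ * αt * σs r * q ^ k * Real.sqrt ((mr r:ℝ)/nr r) * c :=
        add_le_add (add_le_add hGsum hFsum) hEsum
      _ = (l₀ * ν * Real.sqrt d * ω + s₀ * (1 + ν ^ 2 * d) * αt) *
            σs r * q ^ k * Real.sqrt ((mr r : ℝ) / nr r) * c := by ring
  have hne : Nonempty (Fin (nr r)) := ⟨⟨0, hnr r⟩⟩
  show (⨆ j, |(Mrᵀ *ᵥ u) j|) ≤ _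
  exact ciSup_le key
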